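/- Let X and Y be metric spaces and f : X → Y a map. Suppose that for every ε > 0 there exists a function δ : X → ℝ with δ(x) > 0 for all x, such that for all x, y ∈ X, dist(x,y) < min(δ(x), δ(y)) implies dist(f(x), f(y)) < ε. Then for every ε > 0 there exists a countable family of sets A covering X, each a countable union of discrete subfamilies of closed sets, such that diam(f(A)) < ε for each A in the family. -/

import Mathlib

open Set Metric

/-- A family of subsets of `X` is discrete: every point has a neighborhood
meeting at most one member of the family. -/
def IsDiscreteFamily {X : Type*} [TopologicalSpace X] (𝒜 : Set (Set X)) : Prop :=
  ∀ x : X, ∃ U ∈ nhds x, {A ∈ 𝒜 | (A ∩ U).Nonempty}.Subsingleton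

lemma sigma_disc {X : Type*} [MetricSpace X] (R : ℝ) (hR : 0 < R) :
    ∃ D : ℕ → Set (Set X), (∀ m, IsDiscreteFamily (D m)) ∧
      ⋃₀ (⋃ m, D m) = univ ∧
      ∀ m, ∀ C ∈ D m, ∀ x ∈ C, ∀ y ∈ C, dist x y < 2 * R := by
  classical
  have wf : WellFounded (WellOrderingRel (α := X)) := WellOrderingRel.isWellOrder.wf
  have hne : ∀ c : X, {t : X | dist c t < R}.Nonempty := fun c => ⟨c, by simpa using hR⟩
  set sF : X → X := fun c => wf.min {t | dist c t < R} (hne c) with hsF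
  have hsF1 : ∀ c, dist c (sF c) < R := fun c => wf.min_mem _ (hne c)
  have hsF2 : ∀ c t, WellOrderingRel t (sF c) → R ≤ dist c t := by
    intro c t ht
    by_contra hlt
    exact wf.not_lt_min {t | dist c t < R} (by simpa using not_le.1 hlt) ht
  have hex : ∀ c : X, ∃ m : ℕ, dist c (sF c) + 3 * (2:ℝ)⁻¹ ^ m ≤ R := by
    intro c
    obtain ⟨m, hm⟩ := exists_pow_lt_of_lt_one (y := (2:ℝ)⁻¹)
      (show (0:ℝ) < (R - dist c (sF c)) / 3 by linarith [hsF1 c]) (by norm_num)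
    exact ⟨m, by nlinarith [hm]⟩
  set nF : X → ℕ := fun c => Nat.find (hex c) with hnFdef
  have hnF : ∀ c, dist c (sF c) + 3 * (2:ℝ)⁻¹ ^ (nF c) ≤ R := fun c => Nat.find_spec (hex c)
  set V : ℕ → X → Set X := fun m s => ⋃ c ∈ {c | sF c = s ∧ nF c = m}, ball c ((2:ℝ)⁻¹ ^ m)
    with hV
  have hpow : ∀ m : ℕ, (0:ℝ) < (2:ℝ)⁻¹ ^ m := fun m => by positivity
  have key : ∀ m, ∀ c d : X, nF c = m → nF d = m → WellOrderingRel (sF c) (sF d) →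
      3 * (2:ℝ)⁻¹ ^ m ≤ dist c d := by
    intro m c d hc hd hr
    have h1 : R ≤ dist d (sF c) := hsF2 d (sF c) hr
    have h2 : dist c (sF c) + 3 * (2:ℝ)⁻¹ ^ m ≤ R := by rw [← hc]; exact hnF c
    have h3 : dist d (sF c) ≤ dist d c + dist c (sF c) := dist_triangle _ _ _
    have := dist_comm c d
    linarith
  refine ⟨fun m => range (V m), ?_, ?_, ?_⟩
  · intro m x
    refine ⟨ball x ((2:ℝ)⁻¹ ^ m / 2), ball_mem_nhds _ (by positivity), ?_⟩
    rintro A1 ⟨⟨s1, rfl⟩, y1, hy1A, hy1U⟩ A2 ⟨⟨s2, rfl⟩, y2, hy2A, hy2U⟩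
    simp only [hV, mem_iUnion, exists_prop, mem_setOf_eq] at hy1A hy2A
    obtain ⟨c1, ⟨hc1s, hc1n⟩, hy1c⟩ := hy1A
    obtain ⟨c2, ⟨hc2s, hc2n⟩, hy2c⟩ := hy2A
    suffices hs : s1 = s2 by rw [hs]
    have hd12 : dist c1 c2 < 3 * (2:ℝ)⁻¹ ^ m := by
      have t1 : dist c1 c2 ≤ dist c1 y1 + dist y1 x + dist x y2 + dist y2 c2 := by
        have := dist_triangle4 c1 y1 y2 c2
        have := dist_triangle y1 x y2
        linarith
      have := mem_ball.1 hy1c; have := mem_ball.1 hy2c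
      have := mem_ball.1 hy1U; have := mem_ball.1 hy2U
      rw [dist_comm c1 y1, dist_comm y2 c2, dist_comm x y2] at *
      linarith [dist_comm y1 c1, dist_comm y1 x]
    rcases trichotomous_of WellOrderingRel s1 s2 with hlt | heq | hgt
    · exfalso
      have := key m c1 c2 hc1n hc2n (by rw [hc1s, hc2s]; exact hlt)
      linarith
    · exact heq
    · exfalso
      have := key m c2 c1 hc2n hc1n (by rw [hc1s, hc2s]; exact hgt)
      rw [dist_comm c2 c1] at this
      linarith
  · apply eq_univ_of_forall
    intro x
    refine ⟨V (nF x) (sF x), mem_iUnion.2 ⟨nF x, ⟨sF x, rfl⟩⟩, ?_⟩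
    simp only [hV, mem_iUnion, exists_prop, mem_setOf_eq]
    exact ⟨x, ⟨rfl, rfl⟩, mem_ball_self (hpow _)⟩
  · rintro m C ⟨s, rfl⟩ x hx y hy
    simp only [hV, mem_iUnion, exists_prop, mem_setOf_eq] at hx hy
    obtain ⟨c1, ⟨hc1s, hc1n⟩, hxc⟩ := hx
    obtain ⟨c2, ⟨hc2s, hc2n⟩, hyc⟩ := hy
    have hxs : dist x s < R := by
      have h2 : dist c1 (sF c1) + 3 * (2:ℝ)⁻¹ ^ m ≤ R := by rw [← hc1n]; exact hnF c1
      rw [hc1s] at h2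
      have := dist_triangle x c1 s
      have := mem_ball.1 hxc
      have := hpow m
      linarith
    have hys : dist y s < R := by
      have h2 : dist c2 (sF c2) + 3 * (2:ℝ)⁻¹ ^ m ≤ R := by rw [← hc2n]; exact hnF c2
      rw [hc2s] at h2
      have := dist_triangle y c2 s
      have := mem_ball.1 hyc
      have := hpow m
      linarith
    have := dist_triangle x s y
    rw [dist_comm s y] at this
    linarith
theorem stmt0 {X Y : Type*} [MetricSpace X] [MetricSpace Y] (f : X → Y)
    (h : ∀ ε > (0 : ℝ), ∃ δ : X → ℝ, (∀ x, δ x > 0) ∧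
      ∀ x y, dist x y < min (δ x) (δ y) → dist (f x) (f y) < ε) :
    ∀ ε > (0 : ℝ), ∃ c : ℕ → Set (Set X),
      (∀ n, IsDiscreteFamily (c n)) ∧
      (∀ n, ∀ A ∈ c n, IsClosed A) ∧
      ⋃₀ (⋃ n, c n) = univ ∧
      ∀ A ∈ ⋃ n, c n, EMetric.diam (f '' A) < ENNReal.ofReal ε := by
  intro ε hε
  obtain ⟨δ, hδpos, hδ⟩ := h (ε / 4) (by linarith)
  set Xn : ℕ → Set X := fun n => {x | ((n : ℝ) + 1)⁻¹ ≤ δ x} with hXn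
  choose D hD1 hD2 hD3 using
    fun n : ℕ => sigma_disc (X := X) (((n : ℝ) + 1)⁻¹ / 4) (by positivity)
  refine ⟨fun k => (fun C => closure (C ∩ Xn k.unpair.1)) '' D k.unpair.1 k.unpair.2,
    ?_, ?_, ?_, ?_⟩
  · -- discreteness
    intro k x
    obtain ⟨U, hU, hUs⟩ := hD1 k.unpair.1 k.unpair.2 x
    refine ⟨interior U, interior_mem_nhds.2 hU, ?_⟩
    rintro A1 ⟨⟨C1, hC1, rfl⟩, hA1⟩ A2 ⟨⟨C2, hC2, rfl⟩, hA2⟩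
    have hmeet : ∀ C : Set X, (closure (C ∩ Xn k.unpair.1) ∩ interior U).Nonempty →
        (C ∩ U).Nonempty := by
      rintro C ⟨y, hyc, hyU⟩
      obtain ⟨z, hz1, hz2⟩ := mem_closure_iff_nhds.1 hyc (interior U)
        ((isOpen_interior.mem_nhds hyU))
      exact ⟨z, hz2.1, interior_subset hz1⟩
    have := hUs ⟨hC1, hmeet C1 hA1⟩ ⟨hC2, hmeet C2 hA2⟩
    rw [this]
  · rintro k A ⟨C, _, rfl⟩
    exact isClosed_closure
  · apply eq_univ_of_forall
    intro x
    obtain ⟨n, hn⟩ := exists_nat_one_div_lt (hδpos x)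
    have hxXn : x ∈ Xn n := by
      rw [one_div] at hn
      exact le_of_lt hn
    have := hD2 n
    have hx : x ∈ ⋃₀ ⋃ m, D n m := this ▸ mem_univ x
    obtain ⟨C, hC, hxC⟩ := hx
    obtain ⟨m, hm⟩ := mem_iUnion.1 hC
    refine ⟨closure (C ∩ Xn n), ?_, subset_closure ⟨hxC, hxXn⟩⟩
    refine mem_iUnion.2 ⟨Nat.pair n m, ⟨C, ?_, ?_⟩⟩
    · rw [Nat.unpair_pair]; exact hm
    · rw [Nat.unpair_pair]
  · rintro A hA
    obtain ⟨k, ⟨C, hC, rfl⟩⟩ := mem_iUnion.1 hA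
    set n := k.unpair.1 with hn
    have hbound : ∀ y ∈ closure (C ∩ Xn n), ∀ z ∈ closure (C ∩ Xn n),
        dist (f y) (f z) ≤ 3 * (ε / 4) := by
      intro y hy z hz
      have hnpos : (0:ℝ) < ((n : ℝ) + 1)⁻¹ := by positivity
      obtain ⟨x1, hx1, hx1d⟩ := Metric.mem_closure_iff.1 hy
        (min (((n : ℝ) + 1)⁻¹) (δ y)) (lt_min hnpos (hδpos y))
      obtain ⟨x2, hx2, hx2d⟩ := Metric.mem_closure_iff.1 hz
        (min (((n : ℝ) + 1)⁻¹) (δ z)) (lt_min hnpos (hδpos z))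
      have h1 : dist (f x1) (f y) < ε / 4 := by
        apply hδ
        rw [dist_comm]
        exact lt_min (lt_of_lt_of_le (lt_of_lt_of_le hx1d (min_le_left _ _)) hx1.2)
          (lt_of_lt_of_le hx1d (min_le_right _ _))
      have h2 : dist (f x2) (f z) < ε / 4 := by
        apply hδ
        rw [dist_comm]
        exact lt_min (lt_of_lt_of_le (lt_of_lt_of_le hx2d (min_le_left _ _)) hx2.2)
          (lt_of_lt_of_le hx2d (min_le_right _ _))
      have h3 : dist (f x1) (f x2) < ε / 4 := by
        apply hδ
        have hd := hD3 n k.unpair.2 C hC x1 hx1.1 x2 hx2.1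
        have hx1n : ((n : ℝ) + 1)⁻¹ ≤ δ x1 := hx1.2
        have hx2n : ((n : ℝ) + 1)⁻¹ ≤ δ x2 := hx2.2
        have : dist x1 x2 < ((n : ℝ) + 1)⁻¹ := by linarith
        exact lt_of_lt_of_le this (le_min hx1n hx2n)
      calc dist (f y) (f z) ≤ dist (f y) (f x1) + dist (f x1) (f x2) + dist (f x2) (f z) :=
            dist_triangle4 _ _ _ _
        _ ≤ 3 * (ε / 4) := by rw [dist_comm (f y) (f x1)]; linarith
    have hdiam : EMetric.diam (f '' closure (C ∩ Xn n)) ≤ ENNReal.ofReal (3 * (ε / 4)) := by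
      apply EMetric.diam_le
      rintro u ⟨y, hy, rfl⟩ v ⟨z, hz, rfl⟩
      rw [edist_dist]
      exact ENNReal.ofReal_le_ofReal (hbound y hy z hz)
    refine lt_of_le_of_lt hdiam ?_
    rw [ENNReal.ofReal_lt_ofReal_iff hε]
    linarith
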